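/- Let k ≥ 2 and let Δ be a finite simplicial complex with n vertices and dimension at least k − 1 (i.e., Δ has at least one face of cardinality k). Then m_k(Δ) ≥ k²·f_{k−1}(Δ)²/((k+1)·C(n, k−1)) − (n·(k−1) − k·(k−2))·f_{k−1}(Δ)/(k+1) − f_k(Δ); equivalently, (k+1)·C(n, k−1)·(m_k(Δ) + f_k(Δ)) ≥ k²·f_{k−1}(Δ)² − (n·(k−1) − k·(k−2))·C(n, k−1)·f_{k−1}(Δ). -/

import Mathlib

/-- A finite abstract simplicial complex on vertex set `Fin n`: a collection of subsets of
`Fin n` (the faces) closed under taking subsets and containing every singleton. -/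
structure AbsComplex (n : ℕ) where
  faces : Finset (Finset (Fin n))
  down_closed : ∀ F ∈ faces, ∀ G ⊆ F, G ∈ faces
  singleton_mem : ∀ v : Fin n, ({v} : Finset (Fin n)) ∈ faces

namespace AbsComplex

variable {n : ℕ}

/-- `fNum Δ i` is the number of faces of `Δ` of cardinality `i + 1`
(i.e. of dimension `i`). -/
def fNum (Δ : AbsComplex n) (i : ℕ) : ℕ :=
  (Δ.faces.filter fun F => F.card = i + 1).card

/-- A missing face of `Δ`: a set which is not a face but all of whose proper subsets
are faces. -/
def IsMissing (Δ : AbsComplex n) (F : Finset (Fin n)) : Prop :=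
  F ∉ Δ.faces ∧ ∀ G ⊂ F, G ∈ Δ.faces

/-- `mNum Δ i` is the number of missing faces of `Δ` of cardinality `i + 1`
(i.e. of dimension `i`). -/
noncomputable def mNum (Δ : AbsComplex n) (i : ℕ) : ℕ :=
  {F : Finset (Fin n) | Δ.IsMissing F ∧ F.card = i + 1}.ncard

/-- The faces of the link of the face `F` in `Δ`: all faces `G` with `G ∩ F = ∅`
and `G ∪ F` a face. -/
def linkFaces (Δ : AbsComplex n) (F : Finset (Fin n)) : Finset (Finset (Fin n)) :=
  Δ.faces.filter fun G => G ∩ F = ∅ ∧ G ∪ F ∈ Δ.faces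

/-- The reduced Euler characteristic `χ̃ = −1 + f₀ − f₁ + f₂ − ⋯` of a (downward closed,
nonempty) collection of faces, computed as `∑_F (−1)^{|F|−1}` over all faces `F`
(including the empty face). -/
def reducedEuler (s : Finset (Finset (Fin n))) : ℤ :=
  ∑ F ∈ s, (-1 : ℤ) ^ (F.card + 1)

/-- `Δ.IsEulerianDim D` says that `Δ` is an Eulerian complex of dimension `D`: every face has
cardinality at most `D + 1`, some face has cardinality `D + 1`, and for every face `F`
(including the empty face) the reduced Euler characteristic of the link of `F` equals
`(−1)^{D − |F|}` (written as `(−1)^{D + |F|}`, which has the same parity). -/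
def IsEulerianDim (Δ : AbsComplex n) (D : ℕ) : Prop :=
  (∀ F ∈ Δ.faces, F.card ≤ D + 1) ∧ (∃ F ∈ Δ.faces, F.card = D + 1) ∧
    ∀ F ∈ Δ.faces, reducedEuler (Δ.linkFaces F) = (-1 : ℤ) ^ (D + F.card)

/-- `Δ` is `j`-neighborly: every `j`-element subset of the vertex set is a face. -/
def Neighborly (Δ : AbsComplex n) (j : ℕ) : Prop :=
  ∀ S : Finset (Fin n), S.card = j → S ∈ Δ.faces

/-- `Δ` is flag: every missing face has cardinality `2`. -/
def Flag (Δ : AbsComplex n) : Prop :=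
  ∀ F : Finset (Fin n), Δ.IsMissing F → F.card = 2

end AbsComplex

private lemma cast_mul_sub (m : ℕ) : ((m * m - m : ℕ) : ℤ) = (m : ℤ) ^ 2 - m := by
  rcases Nat.eq_zero_or_pos m with h | h
  · simp [h]
  · rw [Nat.cast_sub (Nat.le_mul_of_pos_left m h)]
    push_cast; ring


/-- For `k ≥ 2` and a simplicial complex `Δ` with `n` vertices and dimension at
least `k − 1`, one has
`(k+1)·C(n,k−1)·(m_k + f_k) ≥ k²·f_{k−1}² − (n·(k−1) − k·(k−2))·C(n,k−1)·f_{k−1}`. -/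
theorem statement1 {n k : ℕ} (hk : 2 ≤ k) (Δ : AbsComplex n)
    (hdim : ∃ F ∈ Δ.faces, F.card = k) :
    ((k : ℤ) + 1) * (n.choose (k - 1) : ℤ) * ((Δ.mNum k : ℤ) + (Δ.fNum k : ℤ)) ≥
      (k : ℤ) ^ 2 * (Δ.fNum (k - 1) : ℤ) ^ 2 -
        ((n : ℤ) * ((k : ℤ) - 1) - (k : ℤ) * ((k : ℤ) - 2)) * (n.choose (k - 1) : ℤ) *
          (Δ.fNum (k - 1) : ℤ) := by
  classical
  obtain ⟨F0, hF0, hF0card⟩ := hdim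
  have hkn : k ≤ n := by
    have h := Finset.card_le_univ F0
    rw [hF0card] at h
    simpa using h
  set Fk : Finset (Finset (Fin n)) := Δ.faces.filter (fun A => A.card = k) with hFkdef
  set SS : Finset (Finset (Fin n)) := Finset.univ.powersetCard (k - 1) with hSSdef
  set TT : Finset (Finset (Fin n)) := Finset.univ.powersetCard (k + 1) with hTTdef
  set d : Finset (Fin n) → ℕ := fun S => (Fk.filter (fun A => S ⊆ A)).card with hddef
  set c : Finset (Fin n) → ℕ := fun T => (Fk.filter (fun A => A ⊆ T)).card with hcdef
  have fmem : ∀ A ∈ Fk, A ∈ Δ.faces ∧ A.card = k := fun A hA => Finset.mem_filter.mp hA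
  -- (A) sum of d over SS
  have sumd : ∑ S ∈ SS, d S = k * Fk.card := by
    have h1 : ∑ S ∈ SS, d S = ∑ S ∈ SS, ∑ A ∈ Fk, if S ⊆ A then 1 else 0 :=
      Finset.sum_congr rfl fun S _ => Finset.card_filter _ _
    rw [h1, Finset.sum_comm]
    have key : ∀ A ∈ Fk, (∑ S ∈ SS, if S ⊆ A then (1 : ℕ) else 0) = k := by
      intro A hA
      rw [← Finset.card_filter]
      have heq : SS.filter (fun S => S ⊆ A) = A.powersetCard (k - 1) := by
        ext S
        simp only [hSSdef, Finset.mem_filter, Finset.mem_powersetCard, Finset.subset_univ,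
          true_and]
        tauto
      rw [heq, Finset.card_powersetCard, (fmem A hA).2]
      have h2 : k - (k - 1) = 1 := by omega
      rw [← Nat.choose_symm (Nat.sub_le k 1), h2, Nat.choose_one_right]
    rw [Finset.sum_congr rfl key, Finset.sum_const, smul_eq_mul, mul_comm]
  -- (B) sum of c over TT, upper bound
  have sumc : ∑ T ∈ TT, c T ≤ (n - k) * Fk.card := by
    have h1 : ∑ T ∈ TT, c T = ∑ A ∈ Fk, (TT.filter (fun T => A ⊆ T)).card := by
      have h2 : ∑ T ∈ TT, c T = ∑ T ∈ TT, ∑ A ∈ Fk, if A ⊆ T then 1 else 0 :=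
        Finset.sum_congr rfl fun T _ => Finset.card_filter _ _
      rw [h2, Finset.sum_comm]
      refine Finset.sum_congr rfl fun A _ => ?_
      rw [Finset.card_filter]
    rw [h1]
    have key : ∀ A ∈ Fk, (TT.filter (fun T => A ⊆ T)).card ≤ n - k := by
      intro A hA
      have hAcard := (fmem A hA).2
      have h3 : (TT.filter (fun T => A ⊆ T)).card ≤
          ((Finset.univ \ A).powersetCard 1).card := by
        apply Finset.card_le_card_of_injOn (fun T => T \ A)
        · intro T hT
          obtain ⟨hTT', hAT⟩ := Finset.mem_filter.mp hT
          obtain ⟨-, hTcard⟩ := Finset.mem_powersetCard.mp hTT'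
          rw [Finset.mem_coe, Finset.mem_powersetCard]
          refine ⟨Finset.sdiff_subset_sdiff (Finset.subset_univ T) le_rfl, ?_⟩
          rw [Finset.card_sdiff_of_subset hAT, hTcard, hAcard]
          omega
        · intro T hT T' hT' hEq
          have hAT := (Finset.mem_filter.mp hT).2
          have hAT' := (Finset.mem_filter.mp hT').2
          have hEq' : T \ A = T' \ A := hEq
          calc T = A ∪ T \ A := (Finset.union_sdiff_of_subset hAT).symm
            _ = A ∪ T' \ A := by rw [hEq']
            _ = T' := Finset.union_sdiff_of_subset hAT'
      rw [Finset.card_powersetCard, Nat.choose_one_right] at h3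
      have h4 : (Finset.univ \ A).card = n - k := by
        rw [Finset.card_sdiff_of_subset (Finset.subset_univ A), Finset.card_univ, Fintype.card_fin, hAcard]
      rw [h4] at h3
      exact h3
    calc ∑ A ∈ Fk, (TT.filter (fun T => A ⊆ T)).card ≤ ∑ _A ∈ Fk, (n - k) :=
          Finset.sum_le_sum key
      _ = (n - k) * Fk.card := by rw [Finset.sum_const, smul_eq_mul, mul_comm]
  -- the pair set P
  set P : Finset (Finset (Fin n) × Finset (Fin n)) :=
    (Fk ×ˢ Fk).filter (fun p => (p.1 ∩ p.2).card = k - 1) with hPdef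
  have memP : ∀ p ∈ P, p.1 ∈ Fk ∧ p.2 ∈ Fk ∧ (p.1 ∩ p.2).card = k - 1 ∧ p.1 ≠ p.2 ∧
      (p.1 ∪ p.2).card = k + 1 := by
    intro p hp
    obtain ⟨hq, hcard⟩ := Finset.mem_filter.mp hp
    obtain ⟨h1, h2⟩ := Finset.mem_product.mp hq
    have hc1 := (fmem _ h1).2
    have hc2 := (fmem _ h2).2
    have hne : p.1 ≠ p.2 := by
      intro h
      rw [h, Finset.inter_self, hc2] at hcard
      omega
    have hun := Finset.card_union_add_card_inter p.1 p.2
    rw [hcard, hc1, hc2] at hun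
    exact ⟨h1, h2, hcard, hne, by omega⟩
  -- fibers over intersections
  have fiberS : ∀ S ∈ SS, P.filter (fun p => p.1 ∩ p.2 = S) =
      (Fk.filter (fun A => S ⊆ A)).offDiag := by
    intro S hS
    have hScard : S.card = k - 1 := (Finset.mem_powersetCard.mp hS).2
    ext p
    constructor
    · intro hp'
      obtain ⟨hp, hSeq⟩ := Finset.mem_filter.mp hp'
      obtain ⟨h1, h2, -, hne, -⟩ := memP p hp
      exact Finset.mem_offDiag.mpr ⟨Finset.mem_filter.mpr ⟨h1, hSeq ▸ Finset.inter_subset_left⟩,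
        Finset.mem_filter.mpr ⟨h2, hSeq ▸ Finset.inter_subset_right⟩, hne⟩
    · intro hp'
      obtain ⟨h1, h2, hne⟩ := Finset.mem_offDiag.mp hp'
      obtain ⟨h1', hS1⟩ := Finset.mem_filter.mp h1
      obtain ⟨h2', hS2⟩ := Finset.mem_filter.mp h2
      have hc1 := (fmem _ h1').2
      have hc2 := (fmem _ h2').2
      have hsub : S ⊆ p.1 ∩ p.2 := Finset.subset_inter hS1 hS2
      have hlt : (p.1 ∩ p.2).card < k := by
        rcases Nat.lt_or_ge (p.1 ∩ p.2).card k with h | h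
        · exact h
        · exfalso
          have hip : p.1 ∩ p.2 = p.1 :=
            Finset.eq_of_subset_of_card_le Finset.inter_subset_left (by omega)
          have h12 : p.1 ⊆ p.2 := by
            rw [← hip]; exact Finset.inter_subset_right
          exact hne (Finset.eq_of_subset_of_card_le h12 (by omega))
      have hSeq : S = p.1 ∩ p.2 :=
        Finset.eq_of_subset_of_card_le hsub (by omega)
      refine Finset.mem_filter.mpr ⟨Finset.mem_filter.mpr
        ⟨Finset.mem_product.mpr ⟨h1', h2'⟩, ?_⟩, hSeq.symm⟩
      rw [← hSeq, hScard]
  -- fibers over unions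
  have fiberT : ∀ T ∈ TT, P.filter (fun p => p.1 ∪ p.2 = T) =
      (Fk.filter (fun A => A ⊆ T)).offDiag := by
    intro T hT
    have hTcard : T.card = k + 1 := (Finset.mem_powersetCard.mp hT).2
    ext p
    constructor
    · intro hp'
      obtain ⟨hp, hTeq⟩ := Finset.mem_filter.mp hp'
      obtain ⟨h1, h2, -, hne, -⟩ := memP p hp
      exact Finset.mem_offDiag.mpr ⟨Finset.mem_filter.mpr ⟨h1, hTeq ▸ Finset.subset_union_left⟩,
        Finset.mem_filter.mpr ⟨h2, hTeq ▸ Finset.subset_union_right⟩, hne⟩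
    · intro hp'
      obtain ⟨h1, h2, hne⟩ := Finset.mem_offDiag.mp hp'
      obtain ⟨h1', hT1⟩ := Finset.mem_filter.mp h1
      obtain ⟨h2', hT2⟩ := Finset.mem_filter.mp h2
      have hc1 := (fmem _ h1').2
      have hc2 := (fmem _ h2').2
      have hgt : k < (p.1 ∪ p.2).card := by
        rcases Nat.lt_or_ge k (p.1 ∪ p.2).card with h | h
        · exact h
        · exfalso
          have hup : p.1 = p.1 ∪ p.2 :=
            Finset.eq_of_subset_of_card_le Finset.subset_union_left (by omega)
          have h21 : p.2 ⊆ p.1 := by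
            rw [hup]; exact Finset.subset_union_right
          exact hne ((Finset.eq_of_subset_of_card_le h21 (by omega)).symm)
      have hTeq : p.1 ∪ p.2 = T :=
        Finset.eq_of_subset_of_card_le (Finset.union_subset hT1 hT2) (by omega)
      have hun := Finset.card_union_add_card_inter p.1 p.2
      rw [hTeq, hTcard, hc1, hc2] at hun
      refine Finset.mem_filter.mpr ⟨Finset.mem_filter.mpr
        ⟨Finset.mem_product.mpr ⟨h1', h2'⟩, by omega⟩, hTeq⟩
  -- P.card two ways
  have hPS : (P.card : ℤ) = ∑ S ∈ SS, ((d S : ℤ) ^ 2 - (d S : ℤ)) := by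
    have hmem : ∀ p ∈ P, p.1 ∩ p.2 ∈ SS := by
      intro p hp
      obtain ⟨-, -, hcard, -, -⟩ := memP p hp
      exact Finset.mem_powersetCard.mpr ⟨Finset.subset_univ _, hcard⟩
    have h1 : P.card = ∑ S ∈ SS, ((Fk.filter (fun A => S ⊆ A)).offDiag).card := by
      rw [Finset.card_eq_sum_card_fiberwise hmem]
      exact Finset.sum_congr rfl fun S hS => by rw [fiberS S hS]
    rw [h1, Nat.cast_sum]
    refine Finset.sum_congr rfl fun S hS => ?_
    rw [Finset.offDiag_card]
    exact cast_mul_sub _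
  have hPT : (P.card : ℤ) = ∑ T ∈ TT, ((c T : ℤ) ^ 2 - (c T : ℤ)) := by
    have hmem : ∀ p ∈ P, p.1 ∪ p.2 ∈ TT := by
      intro p hp
      obtain ⟨-, -, -, -, hcard⟩ := memP p hp
      exact Finset.mem_powersetCard.mpr ⟨Finset.subset_univ _, hcard⟩
    have h1 : P.card = ∑ T ∈ TT, ((Fk.filter (fun A => A ⊆ T)).offDiag).card := by
      rw [Finset.card_eq_sum_card_fiberwise hmem]
      exact Finset.sum_congr rfl fun T hT => by rw [fiberT T hT]
    rw [h1, Nat.cast_sum]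
    refine Finset.sum_congr rfl fun T hT => ?_
    rw [Finset.offDiag_card]
    exact cast_mul_sub _
  -- Cauchy--Schwarz
  have hSScard : (SS.card : ℤ) = (n.choose (k - 1) : ℤ) := by
    rw [hSSdef, Finset.card_powersetCard, Finset.card_univ, Fintype.card_fin]
  have CS : ((k : ℤ) * (Fk.card : ℤ)) ^ 2 ≤
      (n.choose (k - 1) : ℤ) * ∑ S ∈ SS, (d S : ℤ) ^ 2 := by
    have h := sq_sum_le_card_mul_sum_sq (s := SS) (f := fun S => (d S : ℤ))
    have h2 : ∑ S ∈ SS, (d S : ℤ) = (k : ℤ) * (Fk.card : ℤ) := by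
      rw [← Nat.cast_sum, sumd]; push_cast; ring
    rw [h2, hSScard] at h
    exact h
  -- pointwise bound and Q
  set Q : Finset (Finset (Fin n)) := TT.filter (fun T => c T = k + 1) with hQdef
  have hTpow : ∀ T ∈ TT, (T.powersetCard k).card = k + 1 := by
    intro T hT
    have hTcard : T.card = k + 1 := (Finset.mem_powersetCard.mp hT).2
    rw [Finset.card_powersetCard, hTcard]
    have h2 : k + 1 - k = 1 := by omega
    rw [← Nat.choose_symm (Nat.le_succ k), h2, Nat.choose_one_right]
  have hcsub : ∀ T, Fk.filter (fun A => A ⊆ T) ⊆ T.powersetCard k := by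
    intro T A hA
    obtain ⟨hA', hAT⟩ := Finset.mem_filter.mp hA
    exact Finset.mem_powersetCard.mpr ⟨hAT, (fmem _ hA').2⟩
  have hcle : ∀ T ∈ TT, c T ≤ k + 1 := by
    intro T hT
    calc c T ≤ (T.powersetCard k).card := Finset.card_le_card (hcsub T)
      _ = k + 1 := hTpow T hT
  have point : ∀ T ∈ TT, (c T : ℤ) ^ 2 - (c T : ℤ) ≤
      ((k : ℤ) - 1) * (c T : ℤ) + ((k : ℤ) + 1) * (if c T = k + 1 then 1 else 0) := by
    intro T hT
    by_cases hQT : c T = k + 1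
    · rw [if_pos hQT, hQT]
      push_cast; ring_nf
      nlinarith [hk]
    · rw [if_neg hQT]
      have h1 : c T ≤ k := by have := hcle T hT; omega
      have h2 : (c T : ℤ) ≤ (k : ℤ) := by exact_mod_cast h1
      have h3 : (0 : ℤ) ≤ (c T : ℤ) := Int.natCast_nonneg _
      nlinarith
  have sumpoint : ∑ T ∈ TT, ((c T : ℤ) ^ 2 - (c T : ℤ)) ≤
      ((k : ℤ) - 1) * (∑ T ∈ TT, (c T : ℤ)) + ((k : ℤ) + 1) * (Q.card : ℤ) := by
    calc ∑ T ∈ TT, ((c T : ℤ) ^ 2 - (c T : ℤ))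
        ≤ ∑ T ∈ TT, (((k : ℤ) - 1) * (c T : ℤ) +
            ((k : ℤ) + 1) * (if c T = k + 1 then 1 else 0)) := Finset.sum_le_sum point
      _ = ((k : ℤ) - 1) * (∑ T ∈ TT, (c T : ℤ)) +
          ((k : ℤ) + 1) * (∑ T ∈ TT, (if c T = k + 1 then (1 : ℤ) else 0)) := by
          rw [Finset.sum_add_distrib, Finset.mul_sum, Finset.mul_sum]
      _ = ((k : ℤ) - 1) * (∑ T ∈ TT, (c T : ℤ)) + ((k : ℤ) + 1) * (Q.card : ℤ) := by
          rw [Finset.sum_boole]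
  -- characterize Q
  have allk : ∀ T ∈ TT, (c T = k + 1 ↔ ∀ A, A ⊆ T → A.card = k → A ∈ Δ.faces) := by
    intro T hT
    constructor
    · intro hcT A hAT hAk
      have heq : Fk.filter (fun A => A ⊆ T) = T.powersetCard k :=
        Finset.eq_of_subset_of_card_le (hcsub T) (by rw [hTpow T hT]; exact hcT.ge)
      have hmem : A ∈ T.powersetCard k := Finset.mem_powersetCard.mpr ⟨hAT, hAk⟩
      rw [← heq] at hmem
      exact (fmem _ (Finset.mem_filter.mp hmem).1).1
    · intro h
      have heq : Fk.filter (fun A => A ⊆ T) = T.powersetCard k := by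
        apply Finset.Subset.antisymm (hcsub T)
        intro A hA
        obtain ⟨hAT, hAk⟩ := Finset.mem_powersetCard.mp hA
        exact Finset.mem_filter.mpr ⟨Finset.mem_filter.mpr ⟨h A hAT hAk, hAk⟩, hAT⟩
      show (Fk.filter (fun A => A ⊆ T)).card = k + 1
      rw [heq]
      exact hTpow T hT
  have hQchar : ∀ T, T ∈ Q ↔ T.card = k + 1 ∧ (T ∈ Δ.faces ∨ Δ.IsMissing T) := by
    intro T
    constructor
    · intro hTQ
      obtain ⟨hTT', hcT⟩ := Finset.mem_filter.mp hTQ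
      have hTcard : T.card = k + 1 := (Finset.mem_powersetCard.mp hTT').2
      refine ⟨hTcard, ?_⟩
      by_cases hf : T ∈ Δ.faces
      · exact Or.inl hf
      · refine Or.inr ⟨hf, fun G hG => ?_⟩
        have hGlt : G.card < k + 1 := by
          have := Finset.card_lt_card hG
          omega
        obtain ⟨A, hGA, hAT, hAcard⟩ :=
          Finset.exists_subsuperset_card_eq (n := k) hG.subset (by omega) (by omega)
        exact Δ.down_closed A ((allk T hTT').mp hcT A hAT hAcard) G hGA
    · rintro ⟨hTcard, hor⟩
      have hTT' : T ∈ TT := Finset.mem_powersetCard.mpr ⟨Finset.subset_univ _, hTcard⟩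
      refine Finset.mem_filter.mpr ⟨hTT', (allk T hTT').mpr ?_⟩
      intro A hAT hAk
      rcases hor with hf | hmiss
      · exact Δ.down_closed T hf A hAT
      · refine hmiss.2 A ?_
        rw [Finset.ssubset_def]
        refine ⟨hAT, fun h => ?_⟩
        have := Finset.card_le_card h
        omega
  -- Q.card = fNum k + mNum k
  have hQcard : Q.card = Δ.fNum k + Δ.mNum k := by
    have hsplit := Finset.card_filter_add_card_filter_not
      (s := Q) (p := fun T => T ∈ Δ.faces)
    have hface : Q.filter (fun T => T ∈ Δ.faces) = Δ.faces.filter (fun T => T.card = k + 1) := by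
      ext T
      simp only [Finset.mem_filter]
      constructor
      · rintro ⟨hTQ, hf⟩
        exact ⟨hf, ((hQchar T).mp hTQ).1⟩
      · rintro ⟨hf, hcard⟩
        exact ⟨(hQchar T).mpr ⟨hcard, Or.inl hf⟩, hf⟩
    have hmiss : Q.filter (fun T => T ∉ Δ.faces) =
        Finset.univ.filter (fun T => Δ.IsMissing T ∧ T.card = k + 1) := by
      ext T
      simp only [Finset.mem_filter, Finset.mem_univ, true_and]
      constructor
      · rintro ⟨hTQ, hf⟩
        obtain ⟨hcard, hor⟩ := (hQchar T).mp hTQ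
        rcases hor with h | h
        · exact absurd h hf
        · exact ⟨h, hcard⟩
      · rintro ⟨hm, hcard⟩
        exact ⟨(hQchar T).mpr ⟨hcard, Or.inr hm⟩, hm.1⟩
    have hmNum : Δ.mNum k =
        (Finset.univ.filter (fun T => Δ.IsMissing T ∧ T.card = k + 1)).card := by
      rw [AbsComplex.mNum]
      have hset : {F : Finset (Fin n) | Δ.IsMissing F ∧ F.card = k + 1} =
          ↑(Finset.univ.filter (fun T => Δ.IsMissing T ∧ T.card = k + 1)) := by
        ext T
        simp
      rw [hset, Set.ncard_coe_finset]
    rw [← hsplit, hface, hmiss, hmNum]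
    rfl
  -- assemble
  have hN0 : (0 : ℤ) ≤ (n.choose (k - 1) : ℤ) := Int.natCast_nonneg _
  have step2 : ∑ S ∈ SS, (d S : ℤ) ^ 2 = (P.card : ℤ) + (k : ℤ) * (Fk.card : ℤ) := by
    have h2 : ∑ S ∈ SS, (d S : ℤ) = (k : ℤ) * (Fk.card : ℤ) := by
      rw [← Nat.cast_sum, sumd]; push_cast; ring
    rw [hPS, ← h2, ← Finset.sum_add_distrib]
    exact Finset.sum_congr rfl fun S _ => by ring
  have step5 : ∑ T ∈ TT, (c T : ℤ) ≤ ((n : ℤ) - (k : ℤ)) * (Fk.card : ℤ) := by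
    have h := sumc
    have h2 : ((n - k : ℕ) : ℤ) = (n : ℤ) - (k : ℤ) := by
      rw [Nat.cast_sub hkn]
    calc ∑ T ∈ TT, (c T : ℤ) = ((∑ T ∈ TT, c T : ℕ) : ℤ) := by rw [Nat.cast_sum]
      _ ≤ (((n - k) * Fk.card : ℕ) : ℤ) := by exact_mod_cast h
      _ = ((n : ℤ) - (k : ℤ)) * (Fk.card : ℤ) := by rw [Nat.cast_mul, h2]
  have hk1 : (0 : ℤ) ≤ (k : ℤ) - 1 := by
    have : (2 : ℤ) ≤ (k : ℤ) := by exact_mod_cast hk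
    omega
  have final : ((k : ℤ) * (Fk.card : ℤ)) ^ 2 ≤
      (n.choose (k - 1) : ℤ) * (((k : ℤ) - 1) * (((n : ℤ) - (k : ℤ)) * (Fk.card : ℤ)) +
        ((k : ℤ) + 1) * (Q.card : ℤ) + (k : ℤ) * (Fk.card : ℤ)) := by
    calc ((k : ℤ) * (Fk.card : ℤ)) ^ 2 ≤ (n.choose (k - 1) : ℤ) * ∑ S ∈ SS, (d S : ℤ) ^ 2 := CS
      _ = (n.choose (k - 1) : ℤ) * ((P.card : ℤ) + (k : ℤ) * (Fk.card : ℤ)) := by rw [step2]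
      _ = (n.choose (k - 1) : ℤ) *
          (∑ T ∈ TT, ((c T : ℤ) ^ 2 - (c T : ℤ)) + (k : ℤ) * (Fk.card : ℤ)) := by rw [hPT]
      _ ≤ _ := by
          apply mul_le_mul_of_nonneg_left _ hN0
          have h6 : ((k : ℤ) - 1) * (∑ T ∈ TT, (c T : ℤ)) ≤
              ((k : ℤ) - 1) * (((n : ℤ) - (k : ℤ)) * (Fk.card : ℤ)) :=
            mul_le_mul_of_nonneg_left step5 hk1
          linarith [sumpoint]
  have hfk1 : (Δ.fNum (k - 1) : ℤ) = (Fk.card : ℤ) := by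
    rw [AbsComplex.fNum]
    congr 2
    ext A
    have : k - 1 + 1 = k := by omega
    rw [this]
  have hEq : (Δ.mNum k : ℤ) + (Δ.fNum k : ℤ) = (Q.card : ℤ) := by
    rw [hQcard]; push_cast; ring
  rw [ge_iff_le, hfk1, hEq]
  nlinarith [final]
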